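/- (BRS inequality, Bruss–Robertson–Steele) Let X_1, ..., X_n be positive, jointly continuously distributed random variables where each X_k has absolutely continuous distribution function F_k, and let X_{1,n} ≤ ... ≤ X_{n,n} be their increasing order statistics. For fixed s > 0, define N(n,s) = 0 if X_{1,n} > s and otherwise N(n,s) = max{k : X_{1,n} + ... + X_{k,n} ≤ s}. Then E(N(n,s)) ≤ ∑_{k=1}^n F_k(t), where t = t(n,s) is the unique solution of ∑_{k=1}^n ∫_0^t x dF_k(x) = s. No independence of the X_k is assumed. -/
import Mathlib


open MeasureTheory ProbabilityTheory Filter Set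
open scoped ENNReal Topology

open Classical in
lemma brs_key {n : ℕ} (x : Fin n → ℝ) (s t : ℝ) (hs : 0 ≤ s) :
    t * ((sSup {m : ℕ | ∃ A : Finset (Fin n), A.card = m ∧ ∑ i ∈ A, x i ≤ s} : ℕ) : ℝ)
      + ∑ k ∈ Finset.univ.filter (fun k => x k ≤ t), x k
    ≤ t * ((Finset.univ.filter (fun k : Fin n => x k ≤ t)).card : ℝ) + s := by
  set S := {m : ℕ | ∃ A : Finset (Fin n), A.card = m ∧ ∑ i ∈ A, x i ≤ s} with hS
  have h0 : 0 ∈ S := ⟨∅, by simp, by simpa using hs⟩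
  have hbdd : BddAbove S := ⟨n, fun m hm => by
    obtain ⟨A, hA, -⟩ := hm
    exact hA ▸ (A.card_le_univ.trans_eq (by simp))⟩
  obtain ⟨A, hAcard, hAsum⟩ : sSup S ∈ S := Nat.sSup_mem ⟨0, h0⟩ hbdd
  set T := Finset.univ.filter (fun k : Fin n => x k ≤ t) with hT
  have a1 : ((A \ T).card : ℝ) * t ≤ ∑ k ∈ A \ T, x k := by
    have := Finset.card_nsmul_le_sum (A \ T) x t (fun k hk => by
      have : ¬ (x k ≤ t) := by
        have := (Finset.mem_sdiff.mp hk).2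
        simpa [hT] using this
      linarith)
    simpa [nsmul_eq_mul] using this
  have a2 : ∑ k ∈ T \ A, x k ≤ ((T \ A).card : ℝ) * t := by
    have := Finset.sum_le_card_nsmul (T \ A) x t (fun k hk => by
      have := (Finset.mem_sdiff.mp hk).1
      simpa [hT] using this)
    simpa [nsmul_eq_mul] using this
  have e1 : ∑ k ∈ T ∩ A, x k + ∑ k ∈ A \ T, x k = ∑ k ∈ A, x k := by
    rw [Finset.inter_comm]; exact Finset.sum_inter_add_sum_sdiff A T x
  have e2 : ∑ k ∈ T ∩ A, x k + ∑ k ∈ T \ A, x k = ∑ k ∈ T, x k :=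
    Finset.sum_inter_add_sum_sdiff T A x
  have c1 : (A ∩ T).card + (A \ T).card = A.card := Finset.card_inter_add_card_sdiff A T
  have c2 : (T ∩ A).card + (T \ A).card = T.card := Finset.card_inter_add_card_sdiff T A
  have ei : A ∩ T = T ∩ A := Finset.inter_comm A T
  have c1' : ((A ∩ T).card : ℝ) + ((A \ T).card : ℝ) = (A.card : ℝ) := by exact_mod_cast c1
  have c2' : ((T ∩ A).card : ℝ) + ((T \ A).card : ℝ) = (T.card : ℝ) := by exact_mod_cast c2
  rw [hAcard, ei] at *
  have m1 : t * ((sSup S : ℕ) : ℝ) = t * ((T ∩ A).card : ℝ) + t * ((A \ T).card : ℝ) := by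
    rw [← c1', mul_add]
  have m2 : t * ((T).card : ℝ) = t * ((T ∩ A).card : ℝ) + t * ((T \ A).card : ℝ) := by
    rw [← c2', mul_add]
  nlinarith [hAsum, a1, a2, e1, e2]


/-- (BRS inequality, Bruss–Robertson–Steele) Let `X 1, ..., X n` be
positive random variables (no independence assumed), each with an absolutely continuous
distribution. For `s > 0` let `N(n,s)(ω)` be the maximal number of the `X k ω` whose sum
does not exceed `s` (equivalently, the maximal `m` such that some `m` of them sum to
at most `s`). If `t` solves `∑ k, ∫_0^t x dF_k(x) = s`, then
`E(N(n,s)) ≤ ∑ k, F_k(t)`. -/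
theorem stmt13 {Ω : Type*} [MeasurableSpace Ω] (μ : Measure Ω) [IsProbabilityMeasure μ]
    (n : ℕ) (X : Fin n → Ω → ℝ)
    (hmeas : ∀ k, Measurable (X k))
    (hpos : ∀ k, ∀ᵐ ω ∂μ, 0 < X k ω)
    (hac : ∀ k, μ.map (X k) ≪ MeasureTheory.volume)
    (s : ℝ) (hs : 0 < s) (t : ℝ) (ht0 : 0 < t)
    (ht : ∑ k : Fin n, ∫⁻ x in Set.Iic t, ENNReal.ofReal x ∂(μ.map (X k)) =
      ENNReal.ofReal s) :
    ∫⁻ ω,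
        ((sSup {m : ℕ | ∃ A : Finset (Fin n), A.card = m ∧ ∑ i ∈ A, X i ω ≤ s} : ℕ) :
          ℝ≥0∞) ∂μ ≤
      ∑ k : Fin n, μ {ω | X k ω ≤ t} := by
  classical
  set N : Ω → ℕ := fun ω =>
    sSup {m : ℕ | ∃ A : Finset (Fin n), A.card = m ∧ ∑ i ∈ A, X i ω ≤ s} with hN
  set M : Ω → ℕ := fun ω => (Finset.univ.filter fun k => X k ω ≤ t).card with hM
  set g : Ω → ℝ≥0∞ := fun ω =>
    ∑ k : Fin n, if X k ω ≤ t then ENNReal.ofReal (X k ω) else 0 with hg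
  have hgmeas : Measurable g := by
    apply Finset.measurable_sum
    intro k _
    exact Measurable.ite (measurableSet_le (hmeas k) measurable_const)
      ((hmeas k).ennreal_ofReal) measurable_const
  -- value of ∫ g
  have hgint : ∫⁻ ω, g ω ∂μ = ENNReal.ofReal s := by
    rw [hg, lintegral_finset_sum]
    · rw [← ht]
      refine Finset.sum_congr rfl fun k _ => ?_
      have h1 : ∫⁻ x in Set.Iic t, ENNReal.ofReal x ∂(μ.map (X k)) =
          ∫⁻ ω in X k ⁻¹' Set.Iic t, ENNReal.ofReal (X k ω) ∂μ :=
        setLIntegral_map measurableSet_Iic measurable_id.ennreal_ofReal (hmeas k)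
      have hmset : MeasurableSet (X k ⁻¹' Set.Iic t) := (hmeas k) measurableSet_Iic
      rw [h1, ← lintegral_indicator hmset]
      exact lintegral_congr fun ω => by
        simp [Set.indicator_apply, Set.mem_preimage, Set.mem_Iic]
    · intro k _
      exact Measurable.ite (measurableSet_le (hmeas k) measurable_const)
        ((hmeas k).ennreal_ofReal) measurable_const
  -- value of ∫ M
  have hMint : ∫⁻ ω, (M ω : ℝ≥0∞) ∂μ = ∑ k : Fin n, μ {ω | X k ω ≤ t} := by
    have hrw : ∀ ω, ((M ω : ℕ) : ℝ≥0∞) =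
        ∑ k : Fin n, Set.indicator {ω' | X k ω' ≤ t} (fun _ => (1 : ℝ≥0∞)) ω := by
      intro ω
      rw [hM]
      simp only [Finset.card_filter, Set.indicator_apply, Set.mem_setOf_eq]
      push_cast
      exact Finset.sum_congr rfl fun k _ => by split <;> simp
    simp only [hrw]
    rw [lintegral_finset_sum]
    · refine Finset.sum_congr rfl fun k _ => ?_
      rw [lintegral_indicator (measurableSet_le (hmeas k) measurable_const)]
      simp
    · intro k _
      exact (measurable_const.indicator (measurableSet_le (hmeas k) measurable_const))
  -- pointwise a.e. inequality
  have hae : ∀ᵐ ω ∂μ,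
      ENNReal.ofReal t * (N ω : ℝ≥0∞) + g ω ≤
        ENNReal.ofReal t * (M ω : ℝ≥0∞) + ENNReal.ofReal s := by
    have hpos' : ∀ᵐ ω ∂μ, ∀ k, 0 < X k ω := (ae_all_iff).mpr hpos
    filter_upwards [hpos'] with ω hω
    have key := brs_key (fun k => X k ω) s t hs.le
    have hNnn : (0:ℝ) ≤ t * (N ω : ℝ) := by positivity
    have hsum_nn : ∀ k ∈ Finset.univ.filter (fun k : Fin n => X k ω ≤ t), 0 ≤ X k ω :=
      fun k _ => (hω k).le
    have hl : ENNReal.ofReal t * (N ω : ℝ≥0∞) + g ω =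
        ENNReal.ofReal (t * (N ω : ℝ) + ∑ k ∈ Finset.univ.filter (fun k : Fin n => X k ω ≤ t), X k ω) := by
      rw [ENNReal.ofReal_add hNnn (Finset.sum_nonneg hsum_nn),
        ENNReal.ofReal_mul ht0.le, ENNReal.ofReal_natCast,
        ENNReal.ofReal_sum_of_nonneg hsum_nn, hg]
      congr 1
      rw [Finset.sum_filter]
    have hr : ENNReal.ofReal t * (M ω : ℝ≥0∞) + ENNReal.ofReal s =
        ENNReal.ofReal (t * (M ω : ℝ) + s) := by
      rw [ENNReal.ofReal_add (by positivity) hs.le,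
        ENNReal.ofReal_mul ht0.le, ENNReal.ofReal_natCast]
    rw [hl, hr]
    exact ENNReal.ofReal_le_ofReal key
  -- integrate
  have hchain : ENNReal.ofReal t * ∫⁻ ω, (N ω : ℝ≥0∞) ∂μ + ENNReal.ofReal s ≤
      ENNReal.ofReal t * (∑ k : Fin n, μ {ω | X k ω ≤ t}) + ENNReal.ofReal s := by
    calc ENNReal.ofReal t * ∫⁻ ω, (N ω : ℝ≥0∞) ∂μ + ENNReal.ofReal s
        = ∫⁻ ω, ENNReal.ofReal t * (N ω : ℝ≥0∞) ∂μ + ∫⁻ ω, g ω ∂μ := by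
          rw [hgint, lintegral_const_mul' _ _ ENNReal.ofReal_ne_top]
      _ = ∫⁻ ω, (ENNReal.ofReal t * (N ω : ℝ≥0∞) + g ω) ∂μ := by
          rw [lintegral_add_right _ hgmeas]
      _ ≤ ∫⁻ ω, (ENNReal.ofReal t * (M ω : ℝ≥0∞) + ENNReal.ofReal s) ∂μ :=
          lintegral_mono_ae hae
      _ = ∫⁻ ω, ENNReal.ofReal t * (M ω : ℝ≥0∞) ∂μ + ENNReal.ofReal s := by
          rw [lintegral_add_right _ measurable_const, lintegral_const, measure_univ, mul_one]
      _ = ENNReal.ofReal t * (∑ k : Fin n, μ {ω | X k ω ≤ t}) + ENNReal.ofReal s := by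
          rw [lintegral_const_mul' _ _ ENNReal.ofReal_ne_top, hMint]
  have h2 : ENNReal.ofReal t * ∫⁻ ω, (N ω : ℝ≥0∞) ∂μ ≤
      ENNReal.ofReal t * (∑ k : Fin n, μ {ω | X k ω ≤ t}) :=
    (ENNReal.add_le_add_iff_right ENNReal.ofReal_ne_top).mp hchain
  have h3 := (ENNReal.mul_le_mul_iff_right (a := ENNReal.ofReal t)
    (by simpa using (ENNReal.ofReal_pos.mpr ht0).ne') ENNReal.ofReal_ne_top).mp h2
  exact h3
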